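/- Let κ₁ < κ₂ be real numbers and P, Q ∈ SO₃(ℝ). If γ ∈ 𝓟_{κ₁}^{κ₂}(P,Q), then κ₁ < inf_{t∈[0,1]} κ⁻_γ(t) ≤ sup_{t∈[0,1]} κ⁺_γ(t) < κ₂; that is, 𝓟_{κ₁}^{κ₂}(P,Q) ⊆ 𝓢_{κ₁}^{κ₂}(P,Q). -/

import Mathlib

open MeasureTheory Real Set Filter Topology NNReal RealInnerProductSpace

noncomputable section

namespace Curves

/-- `ℝ³` with the Euclidean inner product. -/
abbrev E3 : Type := EuclideanSpace ℝ (Fin 3)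

/-- The cross product on `ℝ³`. -/
def cross (x y : E3) : E3 :=
  (EuclideanSpace.equiv (Fin 3) ℝ).symm
    ![x 1 * y 2 - x 2 * y 1, x 2 * y 0 - x 0 * y 2, x 0 * y 1 - x 1 * y 0]

/-- The intrinsic (angular) distance on the unit sphere `𝕊² ⊆ ℝ³`. -/
def sdist (x y : E3) : ℝ := Real.arccos (inner ℝ x y)

/-- `arccot : ℝ → (0, π)`. -/
def arccot (x : ℝ) : ℝ := π / 2 - Real.arctan x

/-- A `C¹` regular curve with values in the unit sphere `𝕊²`, defined on the interval `[a, b]`,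
recorded together with its (continuous, nonvanishing) derivative. -/
structure C1Curve (a b : ℝ) where
  toFun : ℝ → E3
  deriv : ℝ → E3
  mem_sphere : ∀ t ∈ Set.Icc a b, ‖toFun t‖ = 1
  hasDeriv : ∀ t ∈ Set.Icc a b, HasDerivWithinAt toFun (deriv t) (Set.Icc a b) t
  deriv_cont : ContinuousOn deriv (Set.Icc a b)
  regular : ∀ t ∈ Set.Icc a b, deriv t ≠ 0

variable {a b : ℝ}

/-- The unit tangent vector `𝐭_γ(t) = γ̇(t)/|γ̇(t)|`. -/
def tangent (γ : C1Curve a b) (t : ℝ) : E3 := ‖γ.deriv t‖⁻¹ • γ.deriv t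

/-- The unit normal vector `𝐧_γ(t) = γ(t) × 𝐭_γ(t)`. -/
def normal (γ : C1Curve a b) (t : ℝ) : E3 := cross (γ.toFun t) (tangent γ t)

/-- The length `L_γ` of the curve. -/
def clength (γ : C1Curve a b) : ℝ := ∫ t in a..b, ‖γ.deriv t‖

/-- The arc length function `s(t) = ∫_a^t |γ̇|`. -/
def arcLen (γ : C1Curve a b) (t : ℝ) : ℝ := ∫ u in a..t, ‖γ.deriv u‖

/-- The curve is parametrized by arc length. -/
def UnitSpeed (γ : C1Curve a b) : Prop := ∀ t ∈ Set.Icc a b, ‖γ.deriv t‖ = 1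

/-- The curve is parametrized with constant speed `|γ̇| ≡ L_γ`. -/
def ConstantSpeed (γ : C1Curve a b) : Prop := ∀ t ∈ Set.Icc a b, ‖γ.deriv t‖ = clength γ

/-- The circle of center `c ∈ 𝕊²` and spherical radius `r ∈ (0,π)`, oriented anticlockwise
about `c`, passes through `γ(t₁)` with the same unit tangent vector as `γ` there.
(The unit tangent of the anticlockwise circle at a point `x` on it is `(sin r)⁻¹ (c × x)`.) -/
def IsTangentCircleAt (γ : C1Curve a b) (t₁ : ℝ) (c : E3) (r : ℝ) : Prop :=
  ‖c‖ = 1 ∧ r ∈ Set.Ioo 0 π ∧ sdist (γ.toFun t₁) c = r ∧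
    tangent γ t₁ = (Real.sin r)⁻¹ • cross c (γ.toFun t₁)

/-- The circle of center `c` and radius `r` is tangent from the left to `γ` at `γ(t₁)`. -/
def TangentFromLeft (γ : C1Curve a b) (t₁ : ℝ) (c : E3) (r : ℝ) : Prop :=
  IsTangentCircleAt γ t₁ c r ∧
    ∃ δ > 0, ∀ t ∈ Set.Ioo (t₁ - δ) (t₁ + δ) ∩ Set.Icc a b, r ≤ sdist (γ.toFun t) c

/-- The circle of center `c` and radius `r` is tangent from the right to `γ` at `γ(t₁)`. -/
def TangentFromRight (γ : C1Curve a b) (t₁ : ℝ) (c : E3) (r : ℝ) : Prop :=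
  IsTangentCircleAt γ t₁ c r ∧
    ∃ δ > 0, ∀ t ∈ Set.Ioo (t₁ - δ) (t₁ + δ) ∩ Set.Icc a b, sdist (γ.toFun t) c ≤ r

/-- The upper curvature `κ⁺_γ(t)`: the infimum of `cot r` over all circles tangent from the
left to `γ` at `γ(t)` (with `inf ∅ = +∞`), as an extended real number. -/
def upperCurv (γ : C1Curve a b) (t : ℝ) : EReal :=
  sInf {x : EReal | ∃ c r, TangentFromLeft γ t c r ∧ x = ((Real.cot r : ℝ) : EReal)}

/-- The lower curvature `κ⁻_γ(t)`: the supremum of `cot r` over all circles tangent from the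
right to `γ` at `γ(t)` (with `sup ∅ = -∞`), as an extended real number. -/
def lowerCurv (γ : C1Curve a b) (t : ℝ) : EReal :=
  sSup {x : EReal | ∃ c r, TangentFromRight γ t c r ∧ x = ((Real.cot r : ℝ) : EReal)}

/-- The matrix with columns `x`, `y`, `z`. -/
def colMatrix (x y z : E3) : Matrix (Fin 3) (Fin 3) ℝ :=
  Matrix.of fun i j => ![x, y, z] j i

/-- The Frenet frame `𝔉_γ(t)`, the matrix with columns `γ(t)`, `𝐭_γ(t)`, `𝐧_γ(t)`. -/
def frenet (γ : C1Curve a b) (t : ℝ) : Matrix (Fin 3) (Fin 3) ℝ :=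
  colMatrix (γ.toFun t) (tangent γ t) (normal γ t)

/-- `SO₃(ℝ)`. -/
abbrev SO3 := Matrix.specialOrthogonalGroup (Fin 3) ℝ

/-- Lebesgue measure restricted to `[0,1]`. -/
def μ01 : Measure ℝ := volume.restrict (Set.Icc (0:ℝ) 1)

/-- Membership in `𝓘(P,Q)`: the Frenet frame equals `P` at `t = 0` and `Q` at `t = 1`. -/
def MemI (P Q : Matrix (Fin 3) (Fin 3) ℝ) (γ : C1Curve 0 1) : Prop :=
  frenet γ 0 = P ∧ frenet γ 1 = Q

/-- `κ` is the a.e. geodesic curvature of `γ : [0,1] → 𝕊²`: almost everywhere the unit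
tangent vector is differentiable with `d𝐭/dt = |γ̇| (-γ + κ 𝐧)`
(i.e. `𝐭' = -γ + κ𝐧` with respect to arc length). -/
def IsCurvature (γ : C1Curve 0 1) (κ : ℝ → ℝ) : Prop :=
  Measurable κ ∧
    ∀ᵐ t ∂μ01, HasDerivWithinAt (tangent γ)
      (‖γ.deriv t‖ • (-(γ.toFun t) + κ t • normal γ t)) (Set.Icc 0 1) t

/-- Membership in `𝓟_{κ₁}^{κ₂}(P,Q)`: `γ ∈ 𝓘(P,Q)`, `γ̇` is Lipschitz continuous, and the
a.e. defined geodesic curvature `κ` satisfies `κ₁ < essinf κ ≤ esssup κ < κ₂`. -/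
def MemP (κ₁ κ₂ : ℝ) (P Q : Matrix (Fin 3) (Fin 3) ℝ) (γ : C1Curve 0 1) : Prop :=
  MemI P Q γ ∧ (∃ K : ℝ≥0, LipschitzOnWith K γ.deriv (Set.Icc 0 1)) ∧
  ∃ κ : ℝ → ℝ, IsCurvature γ κ ∧
    (κ₁ : EReal) < essInf (fun t => ((κ t : ℝ) : EReal)) μ01 ∧
    essInf (fun t => ((κ t : ℝ) : EReal)) μ01 ≤ essSup (fun t => ((κ t : ℝ) : EReal)) μ01 ∧
    essSup (fun t => ((κ t : ℝ) : EReal)) μ01 < (κ₂ : EReal)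

/-- Membership in `𝓢_{κ₁}^{κ₂}(P,Q)`: `γ ∈ 𝓘(P,Q)` and
`κ₁ < inf_{t ∈ [0,1]} κ⁻_γ(t) ≤ sup_{t ∈ [0,1]} κ⁺_γ(t) < κ₂`. -/
def MemS (κ₁ κ₂ : ℝ) (P Q : Matrix (Fin 3) (Fin 3) ℝ) (γ : C1Curve 0 1) : Prop :=
  MemI P Q γ ∧
    (κ₁ : EReal) < (⨅ t : Set.Icc (0:ℝ) 1, lowerCurv γ ↑t) ∧
    (⨅ t : Set.Icc (0:ℝ) 1, lowerCurv γ ↑t) ≤ (⨆ t : Set.Icc (0:ℝ) 1, upperCurv γ ↑t) ∧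
    (⨆ t : Set.Icc (0:ℝ) 1, upperCurv γ ↑t) < (κ₂ : EReal)

/-- Pointwise two-sided curvature bounds `κ₁ < κ⁻_γ(t) ≤ κ⁺_γ(t) < κ₂` on the whole domain,
i.e. membership in `𝓛_{κ₁}^{κ₂}` (apart from the endpoint conditions). -/
def CurvBetween (κ₁ κ₂ : ℝ) (γ : C1Curve a b) : Prop :=
  ∀ t ∈ Set.Icc a b,
    (κ₁ : EReal) < lowerCurv γ t ∧ lowerCurv γ t ≤ upperCurv γ t ∧
      upperCurv γ t < (κ₂ : EReal)

/-- The `C⁰` distance `d⁰(α,β) = max_t d(α(t), β(t))`. -/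
def d0 (α β : C1Curve 0 1) : ℝ := ⨆ t : Set.Icc (0:ℝ) 1, sdist (α.toFun ↑t) (β.toFun ↑t)

/-- The `C¹` distance `d̄¹(α,β) = max_t [d(α(t),β(t)) + |α̇(t) - β̇(t)|]`. -/
def d1bar (α β : C1Curve 0 1) : ℝ :=
  ⨆ t : Set.Icc (0:ℝ) 1, (sdist (α.toFun ↑t) (β.toFun ↑t) + ‖α.deriv ↑t - β.deriv ↑t‖)

/-- `h(t) = t - t⁻¹`, a diffeomorphism `(0,∞) → ℝ`. -/
def hfun (t : ℝ) : ℝ := t - t⁻¹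

/-- The inverse of `h : (0,∞) → ℝ`. -/
def hInv (y : ℝ) : ℝ := Function.invFunOn hfun (Set.Ioi 0) y

/-- `h_{κ₁,κ₂}(t) = (κ₁ - t)⁻¹ + (κ₂ - t)⁻¹`, a diffeomorphism `(κ₁,κ₂) → ℝ`. -/
def hk (κ₁ κ₂ t : ℝ) : ℝ := (κ₁ - t)⁻¹ + (κ₂ - t)⁻¹

/-- The inverse of `h_{κ₁,κ₂} : (κ₁,κ₂) → ℝ`. -/
def hkInv (κ₁ κ₂ y : ℝ) : ℝ := Function.invFunOn (hk κ₁ κ₂) (Set.Ioo κ₁ κ₂) y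

/-- `(v, w)` is a `(κ₁,κ₂)`-strongly admissible pair of coefficients: `v = h⁻¹(v̂)` and
`w = v ⬝ h_{κ₁,κ₂}⁻¹(ŵ)` for some pair `(v̂, ŵ) ∈ L^∞[0,1] × L^∞[0,1]`; equivalently `v, w`
are measurable with `v > 0`, `w/v ∈ (κ₁,κ₂)`, and `h ∘ v` and `h_{κ₁,κ₂} ∘ (w/v)` are
bounded on `[0,1]`. -/
def StronglyAdmissiblePair (κ₁ κ₂ : ℝ) (v w : ℝ → ℝ) : Prop :=
  Measurable v ∧ Measurable w ∧
  (∀ t, 0 < v t) ∧ (∀ t, w t / v t ∈ Set.Ioo κ₁ κ₂) ∧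
  (∃ C : ℝ, ∀ t ∈ Set.Icc (0:ℝ) 1, |hfun (v t)| ≤ C) ∧
  (∃ C : ℝ, ∀ t ∈ Set.Icc (0:ℝ) 1, |hk κ₁ κ₂ (w t / v t)| ≤ C)

/-- The columns `f₁, f₂, f₃` form a Lipschitz (`W^{1,∞}`) solution of the frame ODE
`Φ' = Φ Λ` on `[0,1]`, where `Λ` has entries `Λ₁₂ = -v`, `Λ₂₁ = v`, `Λ₂₃ = -w`, `Λ₃₂ = w`. -/
def FrameODE (v w : ℝ → ℝ) (f₁ f₂ f₃ : ℝ → E3) : Prop :=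
  (∃ K : ℝ≥0, LipschitzOnWith K f₁ (Set.Icc 0 1)) ∧
  (∃ K : ℝ≥0, LipschitzOnWith K f₂ (Set.Icc 0 1)) ∧
  (∃ K : ℝ≥0, LipschitzOnWith K f₃ (Set.Icc 0 1)) ∧
  (∀ᵐ t ∂μ01,
    HasDerivWithinAt f₁ (v t • f₂ t) (Set.Icc 0 1) t ∧
    HasDerivWithinAt f₂ (-(v t) • f₁ t + w t • f₃ t) (Set.Icc 0 1) t ∧
    HasDerivWithinAt f₃ (-(w t) • f₂ t) (Set.Icc 0 1) t)

/-- The `(κ₁,κ₂)`-strongly admissible parametrized curve `f = Φ e₁` corresponds to the pair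
`(v̂, ŵ) ∈ ℝ × L^∞[0,1]` (with `v̂` constant), with frame solving `Φ' = ΦΛ`, `Φ(0) = P`,
`Φ(1) = Q`. -/
def Corr16 (κ₁ κ₂ : ℝ) (P Q : Matrix (Fin 3) (Fin 3) ℝ)
    (p : ℝ × Lp ℝ ⊤ μ01) (f : ℝ → E3) : Prop :=
  ∃ f₂ f₃ : ℝ → E3,
    FrameODE (fun _ => hInv p.1) (fun t => hInv p.1 * hkInv κ₁ κ₂ (p.2 t)) f f₂ f₃ ∧
    colMatrix (f 0) (f₂ 0) (f₃ 0) = P ∧ colMatrix (f 1) (f₂ 1) (f₃ 1) = Q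

/-- The set `B = {(v̂, ŵ) ∈ ℝ × L^∞[0,1] : Φ_{(v̂,ŵ)}(1) = Q}` (with `Φ_{(v̂,ŵ)}(0) = P`). -/
def BSet (κ₁ κ₂ : ℝ) (P Q : Matrix (Fin 3) (Fin 3) ℝ) : Set (ℝ × Lp ℝ ⊤ μ01) :=
  {p | ∃ f : ℝ → E3, Corr16 κ₁ κ₂ P Q p f}

end Curves

namespace Curves

/-! ### Auxiliary lemmas -/

lemma crossE_apply (x y : E3) (i : Fin 3) : cross x y i =
    ![x 1 * y 2 - x 2 * y 1, x 2 * y 0 - x 0 * y 2, x 0 * y 1 - x 1 * y 0] i := rfl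

lemma inner_E3 (x y : E3) : ⟪x, y⟫ = x 0 * y 0 + x 1 * y 1 + x 2 * y 2 := by
  simp [PiLp.inner_apply, Fin.sum_univ_three, RCLike.inner_apply, conj_trivial]; ring

lemma triple_prod (a b d : E3) : ⟪cross a b, d⟫ = ⟪a, cross b d⟫ := by
  simp [inner_E3, crossE_apply, Fin.sum_univ_three]; ring

lemma inner_cross_self (a b : E3) : ⟪a, cross a b⟫ = 0 := by
  simp [inner_E3, crossE_apply, Fin.sum_univ_three]; ring

lemma inner_cross_self' (a b : E3) : ⟪b, cross a b⟫ = 0 := by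
  simp [inner_E3, crossE_apply, Fin.sum_univ_three]; ring

lemma cross_norm_sq (a b : E3) : ⟪cross a b, cross a b⟫ = ⟪a,a⟫*⟪b,b⟫ - ⟪a,b⟫^2 := by
  simp only [inner_E3]
  simp [inner_E3, crossE_apply, Fin.sum_univ_three]; ring

lemma cross_cross_self (a b : E3) : cross (cross a b) a = ⟪a,a⟫ • b - ⟪a,b⟫ • a := by
  rw [inner_E3, inner_E3]
  apply PiLp.ext; intro i
  fin_cases i <;>
    simp [inner_E3, crossE_apply, PiLp.smul_apply, PiLp.sub_apply, Fin.sum_univ_three] <;> ring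

lemma cross_smul_add_left (α β : ℝ) (u v w : E3) :
    cross (α • u + β • v) w = α • cross u w + β • cross v w := by
  apply PiLp.ext; intro i
  fin_cases i <;>
    simp [crossE_apply, PiLp.smul_apply, PiLp.add_apply] <;> ring

lemma cross_self (a : E3) : cross a a = 0 := by
  apply PiLp.ext; intro i
  fin_cases i <;> simp [crossE_apply] <;> ring

lemma continuous_cross : Continuous (fun p : E3 × E3 => cross p.1 p.2) := by
  have : Continuous (fun p : E3 × E3 => ((EuclideanSpace.equiv (Fin 3) ℝ).symm :
      (Fin 3 → ℝ) → E3) (fun i => cross p.1 p.2 i)) := by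
    apply ((EuclideanSpace.equiv (Fin 3) ℝ).symm : (Fin 3 → ℝ) →L[ℝ] E3).continuous.comp
    apply continuous_pi
    intro i
    fin_cases i
    · exact (by fun_prop : Continuous fun a : E3 × E3 => a.1 1 * a.2 2 - a.1 2 * a.2 1)
    · exact (by fun_prop : Continuous fun a : E3 × E3 => a.1 2 * a.2 0 - a.1 0 * a.2 2)
    · exact (by fun_prop : Continuous fun a : E3 × E3 => a.1 0 * a.2 1 - a.1 1 * a.2 0)
  convert this using 2 with p
  rfl

/-- arccot lands in `(0, π)` -/
lemma arccot_mem_Ioo (x : ℝ) : arccot x ∈ Set.Ioo 0 π := by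
  have h1 := Real.arctan_mem_Ioo x
  obtain ⟨h2, h3⟩ := h1
  constructor <;> [skip; skip] <;> unfold arccot <;> nlinarith [Real.pi_pos]

lemma cot_arccot (x : ℝ) : Real.cot (arccot x) = x := by
  unfold arccot
  rw [Real.cot_eq_cos_div_sin, Real.cos_pi_div_two_sub, Real.sin_pi_div_two_sub]
  rw [← Real.tan_eq_sin_div_cos, Real.tan_arctan]

/-- `cot` is antitone on `(0, π)` -/
lemma cot_le_cot {x y : ℝ} (hx : x ∈ Set.Ioo 0 π) (hy : y ∈ Set.Ioo 0 π) (hxy : x ≤ y) :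
    Real.cot y ≤ Real.cot x := by
  have hsx : 0 < Real.sin x := Real.sin_pos_of_pos_of_lt_pi hx.1 hx.2
  have hsy : 0 < Real.sin y := Real.sin_pos_of_pos_of_lt_pi hy.1 hy.2
  rw [Real.cot_eq_cos_div_sin, Real.cot_eq_cos_div_sin, div_le_div_iff₀ hsy hsx]
  have h := Real.sin_sub y x
  nlinarith [Real.sin_nonneg_of_nonneg_of_le_pi (x := y - x) (by linarith [hx.1])
      (by linarith [hx.1, hy.2]), Real.sin_sub y x]

namespace C1Curve

variable {γ : C1Curve 0 1} {t : ℝ}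

lemma udiff (ht : t ∈ Set.Icc (0:ℝ) 1) : UniqueDiffWithinAt ℝ (Set.Icc (0:ℝ) 1) t :=
  (uniqueDiffOn_Icc zero_lt_one) t ht

lemma inner_self_one (ht : t ∈ Set.Icc (0:ℝ) 1) : ⟪γ.toFun t, γ.toFun t⟫ = 1 := by
  rw [real_inner_self_eq_norm_sq, γ.mem_sphere t ht]; norm_num

lemma inner_deriv_orth (ht : t ∈ Set.Icc (0:ℝ) 1) : ⟪γ.toFun t, γ.deriv t⟫ = 0 := by
  have h1 : HasDerivWithinAt (fun s => ⟪γ.toFun s, γ.toFun s⟫)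
      (⟪γ.toFun t, γ.deriv t⟫ + ⟪γ.deriv t, γ.toFun t⟫) (Set.Icc 0 1) t :=
    (γ.hasDeriv t ht).inner ℝ (γ.hasDeriv t ht)
  have h2 : HasDerivWithinAt (fun s => ⟪γ.toFun s, γ.toFun s⟫) 0 (Set.Icc (0:ℝ) 1) t := by
    refine (hasDerivWithinAt_const t _ (1:ℝ)).congr (fun s hs => inner_self_one hs)
      (inner_self_one ht)
  have := h1.derivWithin (udiff ht) ▸ h2.derivWithin (udiff ht)
  have h3 : ⟪γ.toFun t, γ.deriv t⟫ + ⟪γ.deriv t, γ.toFun t⟫ = 0 := by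
    rw [← h1.derivWithin (udiff ht), h2.derivWithin (udiff ht)]
  rw [real_inner_comm (γ.deriv t) (γ.toFun t)] at h3
  linarith

lemma norm_deriv_pos (ht : t ∈ Set.Icc (0:ℝ) 1) : 0 < ‖γ.deriv t‖ :=
  norm_pos_iff.2 (γ.regular t ht)

lemma norm_tangent (ht : t ∈ Set.Icc (0:ℝ) 1) : ‖tangent γ t‖ = 1 := by
  rw [tangent, norm_smul, norm_inv, norm_norm]
  exact inv_mul_cancel₀ (norm_deriv_pos ht).ne'

lemma inner_tangent_self (ht : t ∈ Set.Icc (0:ℝ) 1) : ⟪tangent γ t, tangent γ t⟫ = 1 := by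
  rw [real_inner_self_eq_norm_sq, norm_tangent ht]; norm_num

lemma inner_toFun_tangent (ht : t ∈ Set.Icc (0:ℝ) 1) : ⟪γ.toFun t, tangent γ t⟫ = 0 := by
  rw [tangent, real_inner_smul_right, inner_deriv_orth ht, mul_zero]

lemma deriv_eq_smul_tangent (ht : t ∈ Set.Icc (0:ℝ) 1) :
    γ.deriv t = ‖γ.deriv t‖ • tangent γ t := by
  rw [tangent, smul_smul, mul_inv_cancel₀ (norm_deriv_pos ht).ne', one_smul]

lemma inner_toFun_normal : ⟪γ.toFun t, normal γ t⟫ = 0 := inner_cross_self _ _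

lemma inner_tangent_normal : ⟪tangent γ t, normal γ t⟫ = 0 := inner_cross_self' _ _

lemma inner_normal_self (ht : t ∈ Set.Icc (0:ℝ) 1) : ⟪normal γ t, normal γ t⟫ = 1 := by
  rw [normal, cross_norm_sq, inner_self_one ht, inner_tangent_self ht,
    inner_toFun_tangent ht]
  norm_num

lemma norm_normal (ht : t ∈ Set.Icc (0:ℝ) 1) : ‖normal γ t‖ = 1 := by
  have h := inner_normal_self (γ := γ) ht
  rw [real_inner_self_eq_norm_sq] at h
  nlinarith [norm_nonneg (normal γ t)]

lemma cross_normal_toFun (ht : t ∈ Set.Icc (0:ℝ) 1) :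
    cross (normal γ t) (γ.toFun t) = tangent γ t := by
  rw [normal, cross_cross_self, inner_self_one ht, inner_toFun_tangent ht]
  simp

lemma continuousOn_toFun : ContinuousOn γ.toFun (Set.Icc 0 1) :=
  fun t ht => (γ.hasDeriv t ht).continuousWithinAt

lemma continuousOn_tangent : ContinuousOn (tangent γ) (Set.Icc 0 1) := by
  apply ContinuousOn.smul (f := fun t => ‖γ.deriv t‖⁻¹) _ γ.deriv_cont
  exact (γ.deriv_cont.norm.inv₀ (fun t ht => (norm_deriv_pos ht).ne'))

lemma continuousOn_normal : ContinuousOn (normal γ) (Set.Icc 0 1) := by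
  have h1 : ContinuousOn (fun t => (γ.toFun t, tangent γ t)) (Set.Icc 0 1) :=
    continuousOn_toFun.prodMk continuousOn_tangent
  exact continuous_cross.comp_continuousOn (f := fun t => (γ.toFun t, tangent γ t)) h1

lemma exists_min_speed : ∃ m : ℝ, 0 < m ∧ ∀ t ∈ Set.Icc (0:ℝ) 1, m ≤ ‖γ.deriv t‖ := by
  obtain ⟨t0, ht0, hmin⟩ := isCompact_Icc.exists_isMinOn (Set.nonempty_Icc.2 zero_le_one)
    γ.deriv_cont.norm
  exact ⟨‖γ.deriv t0‖, norm_deriv_pos ht0, fun t ht => hmin ht⟩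

lemma hasDerivWithinAt_inner_const (c : E3) (ht : t ∈ Set.Icc (0:ℝ) 1) :
    HasDerivWithinAt (fun s => ⟪γ.toFun s, c⟫)
      (‖γ.deriv t‖ * ⟪tangent γ t, c⟫) (Set.Icc 0 1) t := by
  have h := (γ.hasDeriv t ht).inner ℝ (hasDerivWithinAt_const t _ c)
  simp only [inner_zero_right, zero_add] at h
  have e : (inner ℝ (γ.deriv t) c : ℝ) = ‖γ.deriv t‖ * ⟪tangent γ t, c⟫ := by
    conv_lhs => rw [deriv_eq_smul_tangent ht]
    exact real_inner_smul_left _ _ _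
  exact e ▸ h

lemma ae_hasDerivWithinAt_inner_tangent {κ : ℝ → ℝ} (hκ : IsCurvature γ κ) (c : E3) :
    ∀ᵐ t ∂μ01, HasDerivWithinAt (fun s => ⟪tangent γ s, c⟫)
      (‖γ.deriv t‖ * (-⟪γ.toFun t, c⟫ + κ t * ⟪normal γ t, c⟫)) (Set.Icc 0 1) t := by
  filter_upwards [hκ.2] with t h
  have h2 := h.inner ℝ (hasDerivWithinAt_const t _ c)
  simp only [inner_zero_right, zero_add] at h2
  rw [real_inner_smul_left, inner_add_left, inner_neg_left, real_inner_smul_left] at h2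
  exact h2

end C1Curve

/-- A Lipschitz function with a.e. nonnegative derivative (within `[0,1]`) is monotone. -/
lemma monotoneOn_of_ae_deriv_nonneg {g G : ℝ → ℝ} {K : ℝ≥0}
    (hg : LipschitzOnWith K g (Set.Icc 0 1)) {p q : ℝ} (hp : 0 ≤ p) (hq : q ≤ 1)
    (hae : ∀ᵐ t ∂μ01, t ∈ Set.Icc p q →
      HasDerivWithinAt g (G t) (Set.Icc 0 1) t ∧ 0 ≤ G t) :
    MonotoneOn g (Set.Icc p q) := by
  intro x hx y hy hxy
  rcases eq_or_lt_of_le hxy with rfl | hxy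
  · exact le_rfl
  by_contra hlt
  push_neg at hlt
  -- it suffices to find, for each ε > 0, the bound g x ≤ g y + ε
  suffices H : ∀ ε : ℝ, 0 < ε → g x ≤ g y + ε by
    have := H ((g x - g y) / 2) (by linarith)
    linarith
  intro ε hε
  have hx01 : x ∈ Set.Icc (0:ℝ) 1 := ⟨hp.trans hx.1, hx.2.trans hq⟩
  have hy01 : y ∈ Set.Icc (0:ℝ) 1 := ⟨hp.trans hy.1, hy.2.trans hq⟩
  -- the bad set
  set S := {t | ¬ (t ∈ Set.Icc p q →
      HasDerivWithinAt g (G t) (Set.Icc 0 1) t ∧ 0 ≤ G t)} with hSdef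
  have hS : μ01 S = 0 := by
    rw [← MeasureTheory.ae_iff] at *; exact hae
  set T := toMeasurable μ01 S with hTdef
  have hT0 : μ01 T = 0 := by rwa [measure_toMeasurable]
  have hTm : MeasurableSet T := measurableSet_toMeasurable _ _
  have hvolN : volume (T ∩ Set.Icc (0:ℝ) 1) = 0 := by
    rwa [μ01, Measure.restrict_apply hTm] at hT0
  -- an open superset of small measure
  set ε' := ε / (2 * ((K : ℝ) + 1)) with hε'def
  have hε' : 0 < ε' := by positivity
  obtain ⟨U, hNU, hUopen, hUvol⟩ :=
    Set.exists_isOpen_lt_of_lt (T ∩ Set.Icc (0:ℝ) 1) (ENNReal.ofReal ε')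
      (by rw [hvolN]; exact ENNReal.ofReal_pos.2 hε')
  have hUfin : volume U ≠ ⊤ := hUvol.ne_top
  -- the auxiliary measure function
  set V := fun t => (volume (U ∩ Set.Ioc x t)).toReal with hVdef
  have hVadd : ∀ s t : ℝ, x ≤ s → s ≤ t →
      V t = V s + (volume (U ∩ Set.Ioc s t)).toReal := by
    intro s t hs hst
    have hsplit : U ∩ Set.Ioc x t = (U ∩ Set.Ioc x s) ∪ (U ∩ Set.Ioc s t) := by
      rw [← Set.inter_union_distrib_left, Set.Ioc_union_Ioc_eq_Ioc hs hst]
    have hdisj : Disjoint (U ∩ Set.Ioc x s) (U ∩ Set.Ioc s t) :=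
      (Set.Ioc_disjoint_Ioc_of_le le_rfl).mono Set.inter_subset_right Set.inter_subset_right
    simp only [hVdef]
    rw [hsplit, measure_union hdisj (hUopen.measurableSet.inter measurableSet_Ioc),
      ENNReal.toReal_add (ne_top_of_le_ne_top hUfin (measure_mono Set.inter_subset_left))
        (ne_top_of_le_ne_top hUfin (measure_mono Set.inter_subset_left))]
  have hVbd : ∀ s t : ℝ, s ≤ t → (volume (U ∩ Set.Ioc s t)).toReal ≤ t - s := by
    intro s t hst
    have h1 : volume (U ∩ Set.Ioc s t) ≤ volume (Set.Ioc s t) :=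
      measure_mono Set.inter_subset_right
    have h2 : (volume (Set.Ioc s t)).toReal = t - s := by
      rw [Real.volume_Ioc, ENNReal.toReal_ofReal (by linarith)]
    calc (volume (U ∩ Set.Ioc s t)).toReal
        ≤ (volume (Set.Ioc s t)).toReal :=
          ENNReal.toReal_mono (by rw [Real.volume_Ioc]; exact ENNReal.ofReal_ne_top) h1
      _ = t - s := h2
  have hVmono : ∀ s t : ℝ, x ≤ s → s ≤ t → V s ≤ V t := by
    intro s t hs hst
    rw [hVadd s t hs hst]
    exact le_add_of_nonneg_right ENNReal.toReal_nonneg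
  have hVlip : ∀ s t : ℝ, x ≤ s → s ≤ t → V t - V s ≤ t - s := by
    intro s t hs hst
    rw [hVadd s t hs hst]
    have := hVbd s t hst
    linarith
  have hVcont : ContinuousOn V (Set.Icc x y) := by
    have : LipschitzOnWith 1 V (Set.Icc x y) := by
      apply LipschitzOnWith.of_dist_le_mul
      intro s hs t ht
      rw [Real.dist_eq, Real.dist_eq, NNReal.coe_one, one_mul]
      rcases le_total s t with h | h
      · rw [abs_of_nonpos (by have := hVmono s t hs.1 h; linarith),
          abs_of_nonpos (by linarith)]
        have := hVlip s t hs.1 h; linarith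
      · rw [abs_of_nonneg (by have := hVmono t s ht.1 h; linarith),
          abs_of_nonneg (by linarith)]
        have := hVlip t s ht.1 h; linarith
    exact this.continuousOn
  have hVx : V x = 0 := by simp [hVdef]
  -- the fencing function
  set c := ε / (2 * (1 + (y - x))) with hcdef
  have hc : 0 < c := div_pos hε (by linarith)
  set f := fun t => g x - g t - ((K : ℝ) + 1) * V t - c * (t - x) with hfdef
  have key : ∀ ⦃z⦄, z ∈ Set.Icc x y → f z ≤ (fun _ => (0:ℝ)) z := by
    refine image_le_of_liminf_slope_right_lt_deriv_boundary' (f' := fun _ => -c)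
      (B := fun _ => 0) (B' := fun _ => 0) ?_ ?_ ?_ ?_ ?_ ?_
    · -- continuity of f
      exact (((continuousOn_const.sub
        ((hg.continuousOn).mono (Set.Icc_subset_Icc hx01.1 hy01.2))).sub
        (continuousOn_const.mul hVcont)).sub
        (continuousOn_const.mul (continuousOn_id.sub continuousOn_const)))
    · -- slope estimate
      intro t ht r hr'
      have hr : -c < r := hr'
      have ht01 : t ∈ Set.Icc (0:ℝ) 1 := ⟨hx01.1.trans ht.1, (ht.2.le).trans hy01.2⟩
      have hKnn : (0:ℝ) ≤ (K : ℝ) := K.coe_nonneg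
      by_cases htU : t ∈ U
      · -- bad points: the measure term saves us
        obtain ⟨δu, hδu, hball⟩ := Metric.isOpen_iff.1 hUopen t htU
        set w := min y (t + δu / 2) with hwdef
        have hw : t < w := lt_min ht.2 (by linarith)
        refine (Filter.eventually_of_mem (Ioc_mem_nhdsGT_of_mem ⟨le_rfl, hw⟩)
          ?_).frequently
        intro z hz
        have hzt : 0 < z - t := sub_pos.2 hz.1
        have hzy : z ≤ y := hz.2.trans (min_le_left _ _)
        have hz01 : z ∈ Set.Icc (0:ℝ) 1 :=
          ⟨by linarith [ht01.1, hz.1], hzy.trans hy01.2⟩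
        have hIocU : Set.Ioc t z ⊆ U := by
          intro u hu
          apply hball
          rw [Metric.mem_ball, Real.dist_eq, abs_of_pos (by linarith [hu.1])]
          have h2 : z ≤ t + δu / 2 := hz.2.trans (min_le_right _ _)
          have := hu.2
          linarith
        have hVzt : V z - V t = z - t := by
          rw [hVadd t z ht.1 hz.1.le, Set.inter_eq_self_of_subset_right hIocU,
            Real.volume_Ioc, ENNReal.toReal_ofReal (by linarith)]
          ring
        have hgl : g t - g z ≤ (K : ℝ) * (z - t) := by
          have hd := LipschitzOnWith.dist_le_mul hg t ht01 z hz01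
          rw [Real.dist_eq, Real.dist_eq] at hd
          have h1 : g t - g z ≤ |g t - g z| := le_abs_self _
          have h2 : |t - z| = z - t := by rw [abs_sub_comm, abs_of_pos hzt]
          rw [h2] at hd
          linarith
        rw [slope_def_field, div_lt_iff₀ hzt]
        simp only [hfdef]
        nlinarith [mul_pos hzt (show (0:ℝ) < r + 1 + c by linarith)]
      · -- good points: the a.e. derivative bound
        have htIcc : t ∈ Set.Icc p q := ⟨hx.1.trans ht.1, ht.2.le.trans hy.2⟩
        have htgood : HasDerivWithinAt g (G t) (Set.Icc 0 1) t ∧ 0 ≤ G t := by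
          by_contra hcon
          have htS : t ∈ S := fun himp => hcon (himp htIcc)
          exact htU (hNU ⟨subset_toMeasurable _ _ htS, ht01⟩)
        obtain ⟨hder, hG⟩ := htgood
        haveI : (𝓝[Set.Ioc t y] t).NeBot :=
          mem_closure_iff_nhdsWithin_neBot.1
            (by rw [closure_Ioc ht.2.ne]; exact ⟨le_rfl, ht.2.le⟩)
        have hslope := hasDerivWithinAt_iff_tendsto_slope.1 hder
        have hmono : 𝓝[Set.Ioc t y] t ≤ 𝓝[Set.Icc (0:ℝ) 1 \ {t}] t :=
          nhdsWithin_mono _ (fun z hz =>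
            ⟨⟨by linarith [hz.1, ht01.1], hz.2.trans hy01.2⟩, fun hzz => (ne_of_gt hz.1) hzz⟩)
        have hten := hslope.mono_left hmono
        have hrc : (0:ℝ) < r + c := by linarith
        have hev1 : ∀ᶠ z in 𝓝[Set.Ioc t y] t, -((r + c)/2) < slope g t z :=
          hten.eventually (eventually_gt_nhds (by linarith : -((r+c)/2) < G t))
        have hev2 : ∀ᶠ z in 𝓝[Set.Ioc t y] t, z ∈ Set.Ioc t y :=
          eventually_mem_nhdsWithin
        have hfreq : ∃ᶠ z in 𝓝[Set.Ioc t y] t, slope f t z < r := by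
          refine ((hev1.and hev2).mono ?_).frequently
          rintro z ⟨h1, h2⟩
          have hzt : 0 < z - t := sub_pos.2 h2.1
          have hslopeg : g z - g t = slope g t z * (z - t) := by
            rw [slope_def_field]; field_simp
          have hVge : 0 ≤ V z - V t := by
            have := hVmono t z ht.1 h2.1.le; linarith
          rw [slope_def_field, div_lt_iff₀ hzt]
          simp only [hfdef]
          nlinarith [mul_lt_mul_of_pos_right h1 hzt, mul_pos hzt hrc]
        exact hfreq.filter_mono (nhdsWithin_mono _ Set.Ioc_subset_Ioi_self)
    · simp [hfdef, hVx]
    · exact continuousOn_const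
    · exact fun z _ => hasDerivWithinAt_const _ _ _
    · intro z _ _
      show -c < (0:ℝ)
      linarith
  have hfy := key (Set.right_mem_Icc.2 hxy.le)
  -- unfold the conclusion
  have hVy : ((K : ℝ) + 1) * V y ≤ ε / 2 := by
    have h1 : V y ≤ ε' := by
      have := ENNReal.toReal_mono hUfin (measure_mono (Set.inter_subset_left (s := U)
        (t := Set.Ioc x y)))
      have h2 : (volume U).toReal < ε' := ENNReal.toReal_lt_of_lt_ofReal hUvol
      calc V y ≤ (volume U).toReal := this
        _ ≤ ε' := h2.le
    have hK1 : (0:ℝ) < (K : ℝ) + 1 := by positivity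
    calc ((K : ℝ) + 1) * V y ≤ ((K : ℝ) + 1) * ε' := by nlinarith
      _ = ε / 2 := by rw [hε'def]; field_simp
  have hcy : c * (y - x) ≤ ε / 2 := by
    rw [hcdef]
    rw [div_mul_eq_mul_div, div_le_iff₀ (by linarith : (0:ℝ) < 2 * (1 + (y - x)))]
    nlinarith
  simp only [hfdef] at hfy
  linarith

lemma unit_sub_le {a b : E3} {m : ℝ} (hm : 0 < m) (ha : m ≤ ‖a‖) (hb : m ≤ ‖b‖) :
    ‖‖a‖⁻¹ • a - ‖b‖⁻¹ • b‖ ≤ 2 / m * ‖a - b‖ := by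
  have ha0 : (0:ℝ) < ‖a‖ := hm.trans_le ha
  have hb0 : (0:ℝ) < ‖b‖ := hm.trans_le hb
  have key : ‖a‖⁻¹ • a - ‖b‖⁻¹ • b = ‖a‖⁻¹ • (a - b) + (‖a‖⁻¹ - ‖b‖⁻¹) • b := by
    rw [smul_sub, sub_smul]; abel
  rw [key]
  refine (norm_add_le _ _).trans ?_
  rw [norm_smul, norm_smul, Real.norm_eq_abs, Real.norm_eq_abs, abs_of_pos (inv_pos.2 ha0)]
  have habs : |‖a‖⁻¹ - ‖b‖⁻¹| ≤ ‖a - b‖ / (‖a‖ * ‖b‖) := by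
    have he : ‖a‖⁻¹ - ‖b‖⁻¹ = (‖b‖ - ‖a‖) / (‖a‖ * ‖b‖) := by field_simp
    rw [he, abs_div, abs_of_pos (mul_pos ha0 hb0)]
    have h1 : |‖b‖ - ‖a‖| ≤ ‖a - b‖ := by
      have := abs_norm_sub_norm_le b a
      rwa [norm_sub_rev] at this
    gcongr
  calc ‖a‖⁻¹ * ‖a - b‖ + |‖a‖⁻¹ - ‖b‖⁻¹| * ‖b‖
      ≤ ‖a - b‖ / ‖a‖ + (‖a - b‖ / (‖a‖ * ‖b‖)) * ‖b‖ := by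
        rw [inv_mul_eq_div]
        exact add_le_add le_rfl (mul_le_mul_of_nonneg_right habs (norm_nonneg b))
    _ = ‖a - b‖ / ‖a‖ + ‖a - b‖ / ‖a‖ := by
        congr 1
        rw [div_mul_eq_mul_div, mul_comm ‖a‖ ‖b‖]
        rw [mul_comm ‖a - b‖ ‖b‖, mul_div_mul_left _ _ hb0.ne']
    _ ≤ ‖a - b‖ / m + ‖a - b‖ / m := by gcongr
    _ = 2 / m * ‖a - b‖ := by ring

lemma exists_lipschitz_tangent (γ : C1Curve 0 1)
    (hK : ∃ K : ℝ≥0, LipschitzOnWith K γ.deriv (Set.Icc 0 1)) :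
    ∃ K' : ℝ≥0, LipschitzOnWith K' (tangent γ) (Set.Icc 0 1) := by
  obtain ⟨K, hKl⟩ := hK
  obtain ⟨m, hm, hmle⟩ := C1Curve.exists_min_speed (γ := γ)
  refine ⟨Real.toNNReal (2 / m * K), ?_⟩
  apply LipschitzOnWith.of_dist_le_mul
  intro s hs t ht
  rw [Real.coe_toNNReal _ (by positivity), dist_eq_norm, dist_eq_norm]
  have hb := LipschitzOnWith.dist_le_mul hKl s hs t ht
  rw [dist_eq_norm, dist_eq_norm] at hb
  calc ‖tangent γ s - tangent γ t‖
      ≤ 2 / m * ‖γ.deriv s - γ.deriv t‖ := unit_sub_le hm (hmle s hs) (hmle t ht)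
    _ ≤ 2 / m * ((K : ℝ) * ‖s - t‖) := by
        have h2m : (0:ℝ) ≤ 2 / m := by positivity
        exact mul_le_mul_of_nonneg_left hb h2m
    _ = 2 / m * (K : ℝ) * ‖s - t‖ := by ring

lemma isTangentCircleAt_std (γ : C1Curve 0 1) {t₁ r : ℝ}
    (ht₁ : t₁ ∈ Set.Icc (0:ℝ) 1) (hr : r ∈ Set.Ioo 0 π) :
    IsTangentCircleAt γ t₁ (Real.cos r • γ.toFun t₁ + Real.sin r • normal γ t₁) r := by
  have hsin : 0 < Real.sin r := Real.sin_pos_of_pos_of_lt_pi hr.1 hr.2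
  set c := Real.cos r • γ.toFun t₁ + Real.sin r • normal γ t₁ with hcdef
  have hng : ⟪normal γ t₁, γ.toFun t₁⟫ = 0 := by
    rw [real_inner_comm]; exact C1Curve.inner_toFun_normal
  have hcc : ⟪c, c⟫ = 1 := by
    simp only [hcdef, inner_add_left, inner_add_right, real_inner_smul_left,
      real_inner_smul_right]
    rw [C1Curve.inner_self_one ht₁, C1Curve.inner_normal_self ht₁,
      C1Curve.inner_toFun_normal, hng]
    nlinarith [Real.sin_sq_add_cos_sq r]
  have hcnorm : ‖c‖ = 1 := by
    have h := hcc
    rw [real_inner_self_eq_norm_sq] at h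
    nlinarith [norm_nonneg c]
  have hgc : ⟪γ.toFun t₁, c⟫ = Real.cos r := by
    simp only [hcdef, inner_add_right, real_inner_smul_right]
    rw [C1Curve.inner_self_one ht₁, C1Curve.inner_toFun_normal]
    ring
  refine ⟨hcnorm, hr, ?_, ?_⟩
  · rw [sdist, hgc]
    exact Real.arccos_cos hr.1.le hr.2.le
  · rw [hcdef, cross_smul_add_left, cross_self, C1Curve.cross_normal_toFun ht₁, smul_zero,
      zero_add, smul_smul, inv_mul_cancel₀ hsin.ne', one_smul]

lemma center_eq (γ : C1Curve 0 1) {t₁ ρ : ℝ} {c : E3}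
    (ht₁ : t₁ ∈ Set.Icc (0:ℝ) 1) (h : IsTangentCircleAt γ t₁ c ρ) :
    c = Real.cos ρ • γ.toFun t₁ + Real.sin ρ • normal γ t₁ := by
  obtain ⟨hc1, hρ, hsd, htan⟩ := h
  have hsin : 0 < Real.sin ρ := Real.sin_pos_of_pos_of_lt_pi hρ.1 hρ.2
  have habs : |⟪γ.toFun t₁, c⟫| ≤ 1 := by
    have := abs_real_inner_le_norm (γ.toFun t₁) c
    rwa [γ.mem_sphere t₁ ht₁, hc1, one_mul] at this
  have hinner1 : ⟪γ.toFun t₁, c⟫ = Real.cos ρ := by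
    rw [← hsd, sdist, Real.cos_arccos (by linarith [abs_le.1 habs]) (by linarith [abs_le.1 habs])]
  have hinner3 : ⟪c, normal γ t₁⟫ = Real.sin ρ := by
    have h3 : ⟪tangent γ t₁, (Real.sin ρ)⁻¹ • cross c (γ.toFun t₁)⟫ = 1 := by
      rw [← htan]; exact C1Curve.inner_tangent_self ht₁
    rw [real_inner_smul_right] at h3
    have h4 : ⟪tangent γ t₁, cross c (γ.toFun t₁)⟫ = ⟪c, normal γ t₁⟫ := by
      rw [real_inner_comm, triple_prod]; rfl
    rw [h4] at h3
    rw [inv_mul_eq_div, div_eq_one_iff_eq hsin.ne'] at h3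
    exact h3
  have hcc : ⟪c, c⟫ = 1 := by
    rw [real_inner_self_eq_norm_sq, hc1]; norm_num
  have hng : ⟪normal γ t₁, γ.toFun t₁⟫ = 0 := by
    rw [real_inner_comm]; exact C1Curve.inner_toFun_normal
  have hzero : ⟪c - (Real.cos ρ • γ.toFun t₁ + Real.sin ρ • normal γ t₁),
      c - (Real.cos ρ • γ.toFun t₁ + Real.sin ρ • normal γ t₁)⟫ = 0 := by
    simp only [inner_sub_left, inner_sub_right, inner_add_left, inner_add_right,
      real_inner_smul_left, real_inner_smul_right]
    have e2 : ⟪c, γ.toFun t₁⟫ = Real.cos ρ := by rw [real_inner_comm]; exact hinner1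
    have e4 : ⟪normal γ t₁, c⟫ = Real.sin ρ := by rw [real_inner_comm]; exact hinner3
    rw [hcc, C1Curve.inner_self_one ht₁, C1Curve.inner_normal_self ht₁,
      C1Curve.inner_toFun_normal, hng, hinner1, hinner3, e2, e4]
    nlinarith [Real.sin_sq_add_cos_sq ρ]
  have hsub := inner_self_eq_zero.1 hzero
  exact sub_eq_zero.1 hsub

lemma inner_le_one_of_mem {γ : C1Curve 0 1} {z t₁ : ℝ} (hz : z ∈ Set.Icc (0:ℝ) 1)
    (ht₁ : t₁ ∈ Set.Icc (0:ℝ) 1) : ⟪γ.toFun z, γ.toFun t₁⟫ ≤ 1 := by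
  have := real_inner_le_norm (γ.toFun z) (γ.toFun t₁)
  rwa [γ.mem_sphere z hz, γ.mem_sphere t₁ ht₁, one_mul] at this

lemma toFun_eq_of_inner_eq_one {γ : C1Curve 0 1} {z t₁ : ℝ} (hz : z ∈ Set.Icc (0:ℝ) 1)
    (ht₁ : t₁ ∈ Set.Icc (0:ℝ) 1) (h : ⟪γ.toFun z, γ.toFun t₁⟫ = 1) :
    γ.toFun z = γ.toFun t₁ := by
  have h2 : ⟪γ.toFun t₁, γ.toFun z⟫ = 1 := by rw [real_inner_comm]; exact h
  have hzero : ⟪γ.toFun z - γ.toFun t₁, γ.toFun z - γ.toFun t₁⟫ = 0 := by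
    simp only [inner_sub_left, inner_sub_right]
    rw [C1Curve.inner_self_one hz, C1Curve.inner_self_one ht₁, h, h2]
    ring
  exact sub_eq_zero.1 (inner_self_eq_zero.1 hzero)

/-- At a common point of tangency, any circle tangent from the right has `cot` at most
that of any circle tangent from the left. -/
lemma cot_right_le_cot_left (γ : C1Curve 0 1) {t₁ : ℝ} (ht₁ : t₁ ∈ Set.Icc (0:ℝ) 1)
    {c c'' : E3} {ρ r'' : ℝ} (hR : TangentFromRight γ t₁ c ρ)
    (hL : TangentFromLeft γ t₁ c'' r'') : Real.cot ρ ≤ Real.cot r'' := by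
  obtain ⟨hRt, δ₁, hδ₁, hRloc⟩ := hR
  obtain ⟨hLt, δ₂, hδ₂, hLloc⟩ := hL
  by_contra hcon
  push_neg at hcon
  have hρr : ρ < r'' := by
    by_contra h
    push_neg at h
    exact absurd (cot_le_cot hLt.2.1 hRt.2.1 h) (not_le.2 hcon)
  have hρΙ := hRt.2.1
  have hrΙ := hLt.2.1
  have hsρ : 0 < Real.sin ρ := Real.sin_pos_of_pos_of_lt_pi hρΙ.1 hρΙ.2
  have hsr : 0 < Real.sin r'' := Real.sin_pos_of_pos_of_lt_pi hrΙ.1 hrΙ.2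
  set δ := min δ₁ δ₂ with hδdef
  have hδ : 0 < δ := lt_min hδ₁ hδ₂
  set L := max (t₁ - δ) 0 with hLdef
  set R := min (t₁ + δ) 1 with hRdef
  have hLR : L < R := by
    rw [hLdef, hRdef, lt_min_iff, max_lt_iff, max_lt_iff]
    refine ⟨⟨by linarith, by linarith [ht₁.1]⟩, ⟨by linarith [ht₁.2], by norm_num⟩⟩
  have hOsub : Set.Ioo L R ⊆ Set.Ioo (t₁ - δ) (t₁ + δ) ∩ Set.Icc 0 1 := by
    intro z hz
    refine ⟨⟨lt_of_le_of_lt (le_max_left _ _) hz.1, lt_of_lt_of_le hz.2 (min_le_left _ _)⟩,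
      ⟨(le_max_right _ _).trans hz.1.le, hz.2.le.trans (min_le_right _ _)⟩⟩
  have hconst : ∀ z ∈ Set.Ioo L R, γ.toFun z = γ.toFun t₁ := by
    intro z hz
    obtain ⟨hzδ, hzIcc⟩ := hOsub hz
    have hz1 : z ∈ Set.Ioo (t₁ - δ₁) (t₁ + δ₁) ∩ Set.Icc 0 1 :=
      ⟨⟨by linarith [hzδ.1, min_le_left δ₁ δ₂], by linarith [hzδ.2, min_le_left δ₁ δ₂]⟩, hzIcc⟩
    have hz2 : z ∈ Set.Ioo (t₁ - δ₂) (t₁ + δ₂) ∩ Set.Icc 0 1 :=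
      ⟨⟨by linarith [hzδ.1, min_le_right δ₁ δ₂], by linarith [hzδ.2, min_le_right δ₁ δ₂]⟩, hzIcc⟩
    have hip := hRloc z hz1
    have hiq := hLloc z hz2
    -- translate the distance bounds into inner product bounds
    have habsp : |⟪γ.toFun z, c⟫| ≤ 1 := by
      have := abs_real_inner_le_norm (γ.toFun z) c
      rwa [γ.mem_sphere z hzIcc, hRt.1, one_mul] at this
    have habsq : |⟪γ.toFun z, c''⟫| ≤ 1 := by
      have := abs_real_inner_le_norm (γ.toFun z) c''
      rwa [γ.mem_sphere z hzIcc, hLt.1, one_mul] at this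
    have hp : Real.cos ρ ≤ ⟪γ.toFun z, c⟫ := by
      have h1 : Real.cos ρ ≤ Real.cos (sdist (γ.toFun z) c) :=
        Real.cos_le_cos_of_nonneg_of_le_pi (Real.arccos_nonneg _) hρΙ.2.le hip
      rwa [sdist, Real.cos_arccos (by linarith [abs_le.1 habsp])
        (by linarith [abs_le.1 habsp])] at h1
    have hq : ⟪γ.toFun z, c''⟫ ≤ Real.cos r'' := by
      have h1 : Real.cos (sdist (γ.toFun z) c'') ≤ Real.cos r'' :=
        Real.cos_le_cos_of_nonneg_of_le_pi hrΙ.1.le (Real.arccos_le_pi _) hiq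
      rwa [sdist, Real.cos_arccos (by linarith [abs_le.1 habsq])
        (by linarith [abs_le.1 habsq])] at h1
    -- expand using the determined centers
    have hcEq := center_eq γ ht₁ hRt
    have hc''Eq := center_eq γ ht₁ hLt
    set M := ⟪γ.toFun z, γ.toFun t₁⟫ with hMdef
    set Y := ⟪γ.toFun z, normal γ t₁⟫ with hYdef
    have e1 : ⟪γ.toFun z, c⟫ = Real.cos ρ * M + Real.sin ρ * Y := by
      rw [hcEq]
      simp only [inner_add_right, real_inner_smul_right]
      rfl
    have e2 : ⟪γ.toFun z, c''⟫ = Real.cos r'' * M + Real.sin r'' * Y := by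
      rw [hc''Eq]
      simp only [inner_add_right, real_inner_smul_right]
      rfl
    rw [e1] at hp
    rw [e2] at hq
    have hsinsub : 0 < Real.sin (r'' - ρ) :=
      Real.sin_pos_of_pos_of_lt_pi (by linarith) (by linarith [hρΙ.1, hrΙ.2])
    have hcomb : Real.sin (r'' - ρ) ≤ Real.sin (r'' - ρ) * M := by
      rw [Real.sin_sub]
      nlinarith [mul_le_mul_of_nonneg_left hp hsr.le, mul_le_mul_of_nonneg_left hq hsρ.le]
    have hM1 : 1 ≤ M := le_of_mul_le_mul_left (by linarith) hsinsub
    exact toFun_eq_of_inner_eq_one hzIcc ht₁ (le_antisymm (inner_le_one_of_mem hzIcc ht₁) hM1)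
  -- derive a contradiction: the curve would be constant on an open interval
  set t₂ := (L + R) / 2 with ht₂def
  have ht₂O : t₂ ∈ Set.Ioo L R := ⟨by rw [ht₂def]; linarith, by rw [ht₂def]; linarith⟩
  have ht₂Icc : t₂ ∈ Set.Icc (0:ℝ) 1 := (hOsub ht₂O).2
  have hder2 : HasDerivWithinAt γ.toFun (γ.deriv t₂) (Set.Ioo L R) t₂ :=
    (γ.hasDeriv t₂ ht₂Icc).mono (fun z hz => (hOsub hz).2)
  have hder3 : HasDerivWithinAt (fun _ => γ.toFun t₁) (γ.deriv t₂) (Set.Ioo L R) t₂ :=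
    hder2.congr (fun z hz => (hconst z hz).symm) (hconst t₂ ht₂O).symm
  have h4 : HasDerivAt (fun _ => γ.toFun t₁) (γ.deriv t₂) t₂ :=
    hder3.hasDerivAt (isOpen_Ioo.mem_nhds ht₂O)
  have h5 : HasDerivAt (fun _ => γ.toFun t₁) (0 : E3) t₂ := hasDerivAt_const _ _
  exact γ.regular t₂ ht₂Icc (h4.unique h5)

/-- Main comparison lemma: if a.e. `σ (κ - cot r) ≥ η > 0` then near `t₁` the curve stays on
the appropriate side of the circle of radius `r` tangent at `γ(t₁)`. -/
lemma exists_side_bound (γ : C1Curve 0 1)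
    (hLip : ∃ K : ℝ≥0, LipschitzOnWith K γ.deriv (Set.Icc 0 1))
    {κ : ℝ → ℝ} (hκ : IsCurvature γ κ) {σ r η : ℝ} (hσ : σ = 1 ∨ σ = -1)
    (hr : r ∈ Set.Ioo 0 π) (hη : 0 < η)
    (hbd : ∀ᵐ t ∂μ01, η ≤ σ * (κ t - Real.cot r))
    {t₁ : ℝ} (ht₁ : t₁ ∈ Set.Icc (0:ℝ) 1) :
    ∃ δ > 0, ∀ t ∈ Set.Ioo (t₁ - δ) (t₁ + δ) ∩ Set.Icc (0:ℝ) 1,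
      σ * Real.cos r ≤
        σ * ⟪γ.toFun t, Real.cos r • γ.toFun t₁ + Real.sin r • normal γ t₁⟫ := by
  have hσabs : |σ| = 1 := by rcases hσ with h | h <;> rw [h] <;> norm_num
  have hsin : 0 < Real.sin r := Real.sin_pos_of_pos_of_lt_pi hr.1 hr.2
  set c := Real.cos r • γ.toFun t₁ + Real.sin r • normal γ t₁ with hcdef
  have hcnorm : ‖c‖ = 1 := (isTangentCircleAt_std γ ht₁ hr).1
  -- values at t₁
  have hng : ⟪normal γ t₁, γ.toFun t₁⟫ = 0 := by
    rw [real_inner_comm]; exact C1Curve.inner_toFun_normal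
  have hf1 : ⟪γ.toFun t₁, c⟫ = Real.cos r := by
    simp only [hcdef, inner_add_right, real_inner_smul_right]
    rw [C1Curve.inner_self_one ht₁, C1Curve.inner_toFun_normal]; ring
  have hh1 : ⟪normal γ t₁, c⟫ = Real.sin r := by
    simp only [hcdef, inner_add_right, real_inner_smul_right]
    rw [C1Curve.inner_normal_self ht₁, hng]; ring
  have hg1 : ⟪tangent γ t₁, c⟫ = 0 := by
    simp only [hcdef, inner_add_right, real_inner_smul_right]
    have h1 : ⟪tangent γ t₁, γ.toFun t₁⟫ = 0 := by
      rw [real_inner_comm]; exact C1Curve.inner_toFun_tangent ht₁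
    rw [h1, C1Curve.inner_tangent_normal]; ring
  -- the small constant
  set ε₁ := min (Real.sin r / 2) (η * Real.sin r / (4 * (1 + |Real.cot r|))) with hε₁def
  have hε₁pos : 0 < ε₁ := by
    apply lt_min (by positivity)
    have : (0:ℝ) < 1 + |Real.cot r| := by positivity
    positivity
  -- continuity neighborhood
  have hfc : ContinuousOn (fun t => ⟪γ.toFun t, c⟫) (Set.Icc (0:ℝ) 1) :=
    C1Curve.continuousOn_toFun.inner continuousOn_const
  have hnc : ContinuousOn (fun t => ⟪normal γ t, c⟫) (Set.Icc (0:ℝ) 1) :=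
    C1Curve.continuousOn_normal.inner continuousOn_const
  obtain ⟨δ₂, hδ₂pos, hδ₂⟩ : ∃ δ > 0, ∀ t ∈ Set.Icc (0:ℝ) 1, |t - t₁| < δ →
      |⟪γ.toFun t, c⟫ - Real.cos r| < ε₁ ∧ |⟪normal γ t, c⟫ - Real.sin r| < ε₁ := by
    have h1 := Metric.tendsto_nhds.mp (hfc t₁ ht₁) ε₁ hε₁pos
    have h2 := Metric.tendsto_nhds.mp (hnc t₁ ht₁) ε₁ hε₁pos
    have h3 := h1.and h2
    rw [Filter.eventually_iff, Metric.mem_nhdsWithin_iff] at h3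
    obtain ⟨δ, hδpos, hsub⟩ := h3
    refine ⟨δ, hδpos, fun t ht hlt => ?_⟩
    have := hsub ⟨by rw [Metric.mem_ball, Real.dist_eq]; exact hlt, ht⟩
    simp only [Set.mem_setOf_eq, Real.dist_eq, hf1, hh1] at this
    exact this
  -- the subinterval
  set p := max (t₁ - δ₂ / 2) 0 with hpdef
  set q := min (t₁ + δ₂ / 2) 1 with hqdef
  have hp : 0 ≤ p := le_max_right _ _
  have hq : q ≤ 1 := min_le_right _ _
  have ht₁pq : t₁ ∈ Set.Icc p q :=
    ⟨max_le (by linarith) ht₁.1, le_min (by linarith) ht₁.2⟩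
  have hpqsub : Set.Icc p q ⊆ Set.Icc (0:ℝ) 1 := Set.Icc_subset_Icc hp hq
  have hpqδ : ∀ t ∈ Set.Icc p q, |t - t₁| < δ₂ := by
    intro t ht
    have h1 : t₁ - δ₂ / 2 ≤ t := le_trans (le_max_left _ _) ht.1
    have h2 : t ≤ t₁ + δ₂ / 2 := le_trans ht.2 (min_le_left _ _)
    rw [abs_lt]; constructor <;> linarith
  -- monotonicity of g̃ := σ ⟪tangent, c⟫
  have hae : ∀ᵐ t ∂μ01, t ∈ Set.Icc p q →
      HasDerivWithinAt (fun s => σ * ⟪tangent γ s, c⟫)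
        (σ * (‖γ.deriv t‖ * (-⟪γ.toFun t, c⟫ + κ t * ⟪normal γ t, c⟫)))
        (Set.Icc 0 1) t ∧
      0 ≤ σ * (‖γ.deriv t‖ * (-⟪γ.toFun t, c⟫ + κ t * ⟪normal γ t, c⟫)) := by
    filter_upwards [C1Curve.ae_hasDerivWithinAt_inner_tangent hκ c, hbd] with t hd hb htpq
    have ht01 := hpqsub htpq
    refine ⟨hd.const_mul σ, ?_⟩
    obtain ⟨hfb, hhb⟩ := hδ₂ t ht01 (hpqδ t htpq)
    have hhalf : Real.sin r / 2 ≤ ⟪normal γ t, c⟫ := by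
      have h1 : ε₁ ≤ Real.sin r / 2 := min_le_left _ _
      have := abs_lt.1 hhb
      linarith
    have hcots : Real.cot r * Real.sin r = Real.cos r := by
      rw [Real.cot_eq_cos_div_sin]
      field_simp
    have habs1 : |Real.cot r * ⟪normal γ t, c⟫ - ⟪γ.toFun t, c⟫| ≤ (1 + |Real.cot r|) * ε₁ := by
      have he : Real.cot r * ⟪normal γ t, c⟫ - ⟪γ.toFun t, c⟫ =
          Real.cot r * (⟪normal γ t, c⟫ - Real.sin r) - (⟪γ.toFun t, c⟫ - Real.cos r) := by
        rw [mul_sub, hcots]; ring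
      rw [he]
      calc |Real.cot r * (⟪normal γ t, c⟫ - Real.sin r) - (⟪γ.toFun t, c⟫ - Real.cos r)|
          ≤ |Real.cot r * (⟪normal γ t, c⟫ - Real.sin r)| + |⟪γ.toFun t, c⟫ - Real.cos r| :=
            abs_sub _ _
        _ = |Real.cot r| * |⟪normal γ t, c⟫ - Real.sin r| + |⟪γ.toFun t, c⟫ - Real.cos r| := by
            rw [abs_mul]
        _ ≤ |Real.cot r| * ε₁ + ε₁ :=
            add_le_add (mul_le_mul_of_nonneg_left hhb.le (abs_nonneg _)) hfb.le
        _ = (1 + |Real.cot r|) * ε₁ := by ring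
    have hε₁b : (1 + |Real.cot r|) * ε₁ ≤ η * Real.sin r / 4 := by
      have h2 : (0:ℝ) < 1 + |Real.cot r| := by positivity
      have h1 : ε₁ ≤ η * Real.sin r / (4 * (1 + |Real.cot r|)) := min_le_right _ _
      calc (1 + |Real.cot r|) * ε₁
          ≤ (1 + |Real.cot r|) * (η * Real.sin r / (4 * (1 + |Real.cot r|))) := by gcongr
        _ = η * Real.sin r / 4 := by field_simp
    have hsplit : σ * (-⟪γ.toFun t, c⟫ + κ t * ⟪normal γ t, c⟫) =
        σ * (Real.cot r * ⟪normal γ t, c⟫ - ⟪γ.toFun t, c⟫) +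
          (σ * (κ t - Real.cot r)) * ⟪normal γ t, c⟫ := by ring
    have hb1 : -((1 + |Real.cot r|) * ε₁) ≤
        σ * (Real.cot r * ⟪normal γ t, c⟫ - ⟪γ.toFun t, c⟫) := by
      have h1 := neg_abs_le (σ * (Real.cot r * ⟪normal γ t, c⟫ - ⟪γ.toFun t, c⟫))
      rw [abs_mul, hσabs, one_mul] at h1
      linarith
    have hb2 : η * (Real.sin r / 2) ≤ (σ * (κ t - Real.cot r)) * ⟪normal γ t, c⟫ :=
      mul_le_mul hb hhalf (by positivity) (hη.le.trans hb)
    have hkey : η * Real.sin r / 4 ≤ σ * (-⟪γ.toFun t, c⟫ + κ t * ⟪normal γ t, c⟫) := by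
      rw [hsplit]
      linarith
    have hGe : σ * (‖γ.deriv t‖ * (-⟪γ.toFun t, c⟫ + κ t * ⟪normal γ t, c⟫)) =
        ‖γ.deriv t‖ * (σ * (-⟪γ.toFun t, c⟫ + κ t * ⟪normal γ t, c⟫)) := by ring
    rw [hGe]
    exact mul_nonneg (norm_nonneg _) (le_trans (by positivity) hkey)
  obtain ⟨K', hK'⟩ := exists_lipschitz_tangent γ hLip
  have hglip : LipschitzOnWith K' (fun t => σ * ⟪tangent γ t, c⟫) (Set.Icc 0 1) := by
    apply LipschitzOnWith.of_dist_le_mul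
    intro s hs t ht
    rw [Real.dist_eq]
    have h1 : σ * ⟪tangent γ s, c⟫ - σ * ⟪tangent γ t, c⟫ =
        σ * ⟪tangent γ s - tangent γ t, c⟫ := by
      rw [inner_sub_left]; ring
    rw [h1, abs_mul, hσabs, one_mul]
    calc |⟪tangent γ s - tangent γ t, c⟫| ≤ ‖tangent γ s - tangent γ t‖ * ‖c‖ :=
          abs_real_inner_le_norm _ _
      _ = dist (tangent γ s) (tangent γ t) := by rw [hcnorm, mul_one, dist_eq_norm]
      _ ≤ K' * dist s t := LipschitzOnWith.dist_le_mul hK' s hs t ht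
  have hmono := monotoneOn_of_ae_deriv_nonneg hglip hp hq hae
  have hg0 : σ * ⟪tangent γ t₁, c⟫ = 0 := by rw [hg1, mul_zero]
  -- F := σ ⟪γ, c⟫ has derivative ‖γ̇‖ (σ ⟪tangent, c⟫)
  have hFd : ∀ t ∈ Set.Icc (0:ℝ) 1, HasDerivWithinAt (fun s => σ * ⟪γ.toFun s, c⟫)
      (σ * (‖γ.deriv t‖ * ⟪tangent γ t, c⟫)) (Set.Icc 0 1) t :=
    fun t ht => (C1Curve.hasDerivWithinAt_inner_const c ht).const_mul σ
  have hFderiv : ∀ x ∈ Set.Ioo (0:ℝ) 1,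
      deriv (fun s => σ * ⟪γ.toFun s, c⟫) x = σ * (‖γ.deriv x‖ * ⟪tangent γ x, c⟫) := by
    intro x hx
    have hx01 : x ∈ Set.Icc (0:ℝ) 1 := Set.Ioo_subset_Icc_self hx
    exact ((hFd x hx01).hasDerivAt (Icc_mem_nhds hx.1 hx.2)).deriv
  have hFcont : ContinuousOn (fun s => σ * ⟪γ.toFun s, c⟫) (Set.Icc (0:ℝ) 1) :=
    continuousOn_const.mul hfc
  have hmonoF : MonotoneOn (fun s => σ * ⟪γ.toFun s, c⟫) (Set.Icc t₁ q) := by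
    apply monotoneOn_of_deriv_nonneg (convex_Icc _ _)
      (hFcont.mono (Set.Icc_subset_Icc ht₁.1 hq))
    · intro x hx
      rw [interior_Icc] at hx
      have hx01 : x ∈ Set.Ioo (0:ℝ) 1 :=
        ⟨lt_of_le_of_lt ht₁.1 hx.1, lt_of_lt_of_le hx.2 hq⟩
      exact (((hFd x (Set.Ioo_subset_Icc_self hx01)).hasDerivAt
        (Icc_mem_nhds hx01.1 hx01.2)).differentiableAt).differentiableWithinAt
    · intro x hx
      rw [interior_Icc] at hx
      have hx01 : x ∈ Set.Ioo (0:ℝ) 1 :=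
        ⟨lt_of_le_of_lt ht₁.1 hx.1, lt_of_lt_of_le hx.2 hq⟩
      rw [hFderiv x hx01]
      have hxpq : x ∈ Set.Icc p q := ⟨ht₁pq.1.trans hx.1.le, hx.2.le⟩
      have hgx : 0 ≤ σ * ⟪tangent γ x, c⟫ := by
        have := hmono ht₁pq hxpq hx.1.le
        simp only [hg0] at this
        exact this
      have he : σ * (‖γ.deriv x‖ * ⟪tangent γ x, c⟫) =
          ‖γ.deriv x‖ * (σ * ⟪tangent γ x, c⟫) := by ring
      rw [he]
      exact mul_nonneg (norm_nonneg _) hgx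
  have hantiF : AntitoneOn (fun s => σ * ⟪γ.toFun s, c⟫) (Set.Icc p t₁) := by
    apply antitoneOn_of_deriv_nonpos (convex_Icc _ _)
      (hFcont.mono (Set.Icc_subset_Icc hp ht₁.2))
    · intro x hx
      rw [interior_Icc] at hx
      have hx01 : x ∈ Set.Ioo (0:ℝ) 1 :=
        ⟨lt_of_le_of_lt hp hx.1, lt_of_lt_of_le hx.2 ht₁.2⟩
      exact (((hFd x (Set.Ioo_subset_Icc_self hx01)).hasDerivAt
        (Icc_mem_nhds hx01.1 hx01.2)).differentiableAt).differentiableWithinAt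
    · intro x hx
      rw [interior_Icc] at hx
      have hx01 : x ∈ Set.Ioo (0:ℝ) 1 :=
        ⟨lt_of_le_of_lt hp hx.1, lt_of_lt_of_le hx.2 ht₁.2⟩
      rw [hFderiv x hx01]
      have hxpq : x ∈ Set.Icc p q := ⟨hx.1.le, hx.2.le.trans ht₁pq.2⟩
      have hgx : σ * ⟪tangent γ x, c⟫ ≤ 0 := by
        have := hmono hxpq ht₁pq hx.2.le
        simp only [hg0] at this
        exact this
      have he : σ * (‖γ.deriv x‖ * ⟪tangent γ x, c⟫) =
          ‖γ.deriv x‖ * (σ * ⟪tangent γ x, c⟫) := by ring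
      rw [he]
      exact mul_nonpos_of_nonneg_of_nonpos (norm_nonneg _) hgx
  -- conclusion
  refine ⟨δ₂ / 2, by positivity, ?_⟩
  rintro t ⟨htIoo, htIcc⟩
  have htpq : t ∈ Set.Icc p q :=
    ⟨max_le htIoo.1.le htIcc.1, le_min htIoo.2.le htIcc.2⟩
  have hgoal : σ * ⟪γ.toFun t₁, c⟫ ≤ σ * ⟪γ.toFun t, c⟫ := by
    rcases le_total t₁ t with h | h
    · exact hmonoF ⟨le_rfl, ht₁pq.2⟩ ⟨h, htpq.2⟩ h
    · exact hantiF ⟨htpq.1, h⟩ ⟨ht₁pq.1, le_rfl⟩ h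
  rw [hf1] at hgoal
  exact hgoal

lemma arccos_anti {x y : ℝ} (hxy : x ≤ y) : Real.arccos y ≤ Real.arccos x := by
  rw [Real.arccos_eq_pi_div_two_sub_arcsin, Real.arccos_eq_pi_div_two_sub_arcsin]
  have := Real.monotone_arcsin hxy
  linarith
/-- `𝓟_{κ₁}^{κ₂}(P,Q) ⊆ 𝓢_{κ₁}^{κ₂}(P,Q)`: if `γ ∈ 𝓟_{κ₁}^{κ₂}(P,Q)` then
`κ₁ < inf_{t∈[0,1]} κ⁻_γ(t) ≤ sup_{t∈[0,1]} κ⁺_γ(t) < κ₂`. -/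
theorem stmt_1 (κ₁ κ₂ : ℝ) (h12 : κ₁ < κ₂) (P Q : SO3) (γ : C1Curve 0 1)
    (hγ : MemP κ₁ κ₂ (P : Matrix (Fin 3) (Fin 3) ℝ) (Q : Matrix (Fin 3) (Fin 3) ℝ) γ) :
    MemS κ₁ κ₂ (P : Matrix (Fin 3) (Fin 3) ℝ) (Q : Matrix (Fin 3) (Fin 3) ℝ) γ := by
  obtain ⟨hMemI, hLip, κ, hκ, hlow, hmid, hhigh⟩ := hγ
  obtain ⟨κl, h1, h2⟩ := EReal.exists_between_coe_real hlow
  obtain ⟨κh, h3, h4⟩ := EReal.exists_between_coe_real hhigh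
  have h1' : κ₁ < κl := EReal.coe_lt_coe_iff.1 h1
  have h4' : κh < κ₂ := EReal.coe_lt_coe_iff.1 h4
  have haeLow : ∀ᵐ t ∂μ01, κl < κ t := by
    filter_upwards [ae_lt_of_lt_essInf h2] with t ht
    exact_mod_cast ht
  have haeHigh : ∀ᵐ t ∂μ01, κ t < κh := by
    filter_upwards [ae_lt_of_essSup_lt h3] with t ht
    exact_mod_cast ht
  set κR := (κ₁ + κl) / 2 with hκRdef
  set κL := (κh + κ₂) / 2 with hκLdef
  have hκR1 : κ₁ < κR := by rw [hκRdef]; linarith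
  have hκR2 : κR < κl := by rw [hκRdef]; linarith
  have hκL1 : κh < κL := by rw [hκLdef]; linarith
  have hκL2 : κL < κ₂ := by rw [hκLdef]; linarith
  set rR := arccot κR with hrRdef
  set rL := arccot κL with hrLdef
  have hrR := arccot_mem_Ioo κR
  have hrL := arccot_mem_Ioo κL
  have hcotR : Real.cot rR = κR := cot_arccot κR
  have hcotL : Real.cot rL = κL := cot_arccot κL
  have hbdR : ∀ᵐ t ∂μ01, κl - κR ≤ (1:ℝ) * (κ t - Real.cot rR) := by
    filter_upwards [haeLow] with t ht
    rw [hcotR, one_mul]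
    linarith
  have hbdL : ∀ᵐ t ∂μ01, κL - κh ≤ (-1:ℝ) * (κ t - Real.cot rL) := by
    filter_upwards [haeHigh] with t ht
    rw [hcotL, neg_one_mul]
    linarith
  -- tangent circles from the right
  have hTR : ∀ t₁ ∈ Set.Icc (0:ℝ) 1, TangentFromRight γ t₁
      (Real.cos rR • γ.toFun t₁ + Real.sin rR • normal γ t₁) rR := by
    intro t₁ ht₁
    refine ⟨isTangentCircleAt_std γ ht₁ hrR, ?_⟩
    obtain ⟨δ, hδ, hbound⟩ := exists_side_bound γ hLip hκ (Or.inl rfl) hrR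
      (by linarith : (0:ℝ) < κl - κR) hbdR ht₁
    refine ⟨δ, hδ, fun t ht => ?_⟩
    have h := hbound t ht
    rw [one_mul, one_mul] at h
    rw [sdist]
    calc Real.arccos ⟪γ.toFun t, Real.cos rR • γ.toFun t₁ + Real.sin rR • normal γ t₁⟫
        ≤ Real.arccos (Real.cos rR) := arccos_anti h
      _ = rR := Real.arccos_cos hrR.1.le hrR.2.le
  -- tangent circles from the left
  have hTL : ∀ t₁ ∈ Set.Icc (0:ℝ) 1, TangentFromLeft γ t₁
      (Real.cos rL • γ.toFun t₁ + Real.sin rL • normal γ t₁) rL := by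
    intro t₁ ht₁
    refine ⟨isTangentCircleAt_std γ ht₁ hrL, ?_⟩
    obtain ⟨δ, hδ, hbound⟩ := exists_side_bound γ hLip hκ (Or.inr rfl) hrL
      (by linarith : (0:ℝ) < κL - κh) hbdL ht₁
    refine ⟨δ, hδ, fun t ht => ?_⟩
    have h := hbound t ht
    rw [neg_one_mul, neg_one_mul, neg_le_neg_iff] at h
    rw [sdist]
    calc rL = Real.arccos (Real.cos rL) := (Real.arccos_cos hrL.1.le hrL.2.le).symm
      _ ≤ Real.arccos ⟪γ.toFun t, Real.cos rL • γ.toFun t₁ + Real.sin rL • normal γ t₁⟫ :=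
          arccos_anti h
  have hlowB : ∀ t₁ ∈ Set.Icc (0:ℝ) 1, ((κR : ℝ) : EReal) ≤ lowerCurv γ t₁ := by
    intro t₁ ht₁
    exact le_sSup ⟨_, rR, hTR t₁ ht₁, by rw [hcotR]⟩
  have hupB : ∀ t₁ ∈ Set.Icc (0:ℝ) 1, upperCurv γ t₁ ≤ ((κL : ℝ) : EReal) := by
    intro t₁ ht₁
    exact sInf_le ⟨_, rL, hTL t₁ ht₁, by rw [hcotL]⟩
  have hlowup : ∀ t₁ ∈ Set.Icc (0:ℝ) 1, lowerCurv γ t₁ ≤ upperCurv γ t₁ := by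
    intro t₁ ht₁
    apply sSup_le
    rintro x ⟨c, ρ, hRight, rfl⟩
    apply le_sInf
    rintro y ⟨c'', r'', hLeft, rfl⟩
    exact EReal.coe_le_coe_iff.2 (cot_right_le_cot_left γ ht₁ hRight hLeft)
  have h0mem : (0:ℝ) ∈ Set.Icc (0:ℝ) 1 := ⟨le_rfl, zero_le_one⟩
  refine ⟨hMemI, ?_, ?_, ?_⟩
  · calc (κ₁ : EReal) < ((κR : ℝ) : EReal) := EReal.coe_lt_coe_iff.2 hκR1
      _ ≤ ⨅ t : Set.Icc (0:ℝ) 1, lowerCurv γ ↑t := le_iInf fun t => hlowB ↑t t.2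
  · calc (⨅ t : Set.Icc (0:ℝ) 1, lowerCurv γ ↑t) ≤ lowerCurv γ 0 :=
        iInf_le _ (⟨0, h0mem⟩ : Set.Icc (0:ℝ) 1)
      _ ≤ upperCurv γ 0 := hlowup 0 h0mem
      _ ≤ ⨆ t : Set.Icc (0:ℝ) 1, upperCurv γ ↑t :=
        le_iSup (fun t : Set.Icc (0:ℝ) 1 => upperCurv γ ↑t) (⟨0, h0mem⟩ : Set.Icc (0:ℝ) 1)
  · calc (⨆ t : Set.Icc (0:ℝ) 1, upperCurv γ ↑t) ≤ ((κL : ℝ) : EReal) :=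
        iSup_le fun t => hupB ↑t t.2
      _ < (κ₂ : EReal) := EReal.coe_lt_coe_iff.2 hκL2

end Curves
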